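/- Let S_n be a weighted star on n vertices with center adjacent to n−1 leaves, with edge weights listed in decreasing order ω_1 ≥ ⋯ ≥ ω_t > 0 ≥ ω_{t+1} ≥ ⋯ ≥ ω_{n−1}. Then for every k with 1 ≤ k ≤ n−2 and every orthonormal family u_1, …, u_k of vectors in ℝ^n each orthogonal to the all-ones vector, Σ_{i=1}^k u_iᵀ L_{S_n} u_i ≤ (Σ_{i=1}^t ω_i) + Σ_{i=1}^k ω_i, and Σ_{i=1}^{n−1} μ_i(L_{S_n}) = 2 Σ_{i=1}^{n−1} ω_i, i.e. the trace of L_{S_n} is twice the total edge weight. -/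

import Mathlib

open Matrix

open Finset

/-- The Laplacian matrix of a weighted graph with (symmetric, zero-diagonal)
adjacency matrix `A`: `L_A = D - A` where `D` is the diagonal matrix of row sums. -/
def lap {n : ℕ} (A : Matrix (Fin n) (Fin n) ℝ) : Matrix (Fin n) (Fin n) ℝ :=
  Matrix.diagonal (fun i => ∑ j, A i j) - A

/-- The adjacency matrix of the weighted star on `m + 1` vertices with center `0`
and edge weights `ω 0, …, ω (m-1)` on the edges to the `m` leaves. -/
def starAdj (m : ℕ) (ω : Fin m → ℝ) : Matrix (Fin (m + 1)) (Fin (m + 1)) ℝ :=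
  fun i j =>
    if hi : i = 0 then (if hj : j = 0 then 0 else ω (j.pred hj))
    else if hj : j = 0 then ω (i.pred hi) else 0


lemma bessel {k n : ℕ} {u : Fin k → Fin n → ℝ}
    (h : ∀ i j, u i ⬝ᵥ u j = if i = j then 1 else 0)
    (x : Fin n → ℝ) : ∑ i, (x ⬝ᵥ u i)^2 ≤ x ⬝ᵥ x := by
  classical
  set c : Fin k → ℝ := fun i => x ⬝ᵥ u i with hcdef
  have hci : ∀ i, c i = ∑ y, x y * u i y := fun i => rfl
  have hss : ∑ y, (∑ i, c i * u i y) ^ 2 = ∑ i, c i ^ 2 := by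
    have e1 : ∀ y : Fin n, (∑ i, c i * u i y) ^ 2
        = ∑ i, ∑ j, c i * c j * (u i y * u j y) := by
      intro y
      rw [sq, Finset.sum_mul_sum]
      exact Finset.sum_congr rfl fun i _ => Finset.sum_congr rfl fun j _ => by ring
    rw [Finset.sum_congr rfl fun y _ => e1 y, Finset.sum_comm]
    have e2 : ∀ i, ∑ y, ∑ j, c i * c j * (u i y * u j y)
        = ∑ j, c i * c j * (u i ⬝ᵥ u j) := by
      intro i
      rw [Finset.sum_comm]
      refine Finset.sum_congr rfl fun j _ => ?_
      simp only [dotProduct, Finset.mul_sum]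
    rw [Finset.sum_congr rfl fun i _ => e2 i]
    simp [h, sq]
  have hxs : ∑ y, x y * (∑ i, c i * u i y) = ∑ i, c i ^ 2 := by
    have e1 : ∀ y, x y * (∑ i, c i * u i y) = ∑ i, c i * (x y * u i y) := by
      intro y
      rw [Finset.mul_sum]
      exact Finset.sum_congr rfl fun i _ => by ring
    rw [Finset.sum_congr rfl fun y _ => e1 y, Finset.sum_comm]
    refine Finset.sum_congr rfl fun i _ => ?_
    rw [← Finset.mul_sum, ← hci, sq]
  have key : 0 ≤ ∑ y, (x y - ∑ i, c i * u i y) ^ 2 :=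
    Finset.sum_nonneg fun y _ => sq_nonneg _
  have expand : ∑ y, (x y - ∑ i, c i * u i y) ^ 2
      = x ⬝ᵥ x - ∑ i, c i ^ 2 := by
    have e1 : ∀ y, (x y - ∑ i, c i * u i y) ^ 2
        = x y * x y - 2 * (x y * (∑ i, c i * u i y)) + (∑ i, c i * u i y) ^ 2 := by
      intro y; ring
    rw [Finset.sum_congr rfl fun y _ => e1 y]
    rw [Finset.sum_add_distrib, Finset.sum_sub_distrib, hss, ← Finset.mul_sum, hxs]
    simp only [dotProduct]
    ring
  linarith [expand ▸ key]

lemma abel_le : ∀ (n : ℕ) (f b c : ℕ → ℝ),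
    (∀ i, i < n → 0 ≤ f i) →
    (∀ i j, i ≤ j → j < n → f j ≤ f i) →
    (∀ r, r ≤ n → ∑ j ∈ range r, b j ≤ ∑ j ∈ range r, c j) →
    ∑ j ∈ range n, f j * b j ≤ ∑ j ∈ range n, f j * c j := by
  intro n
  induction n with
  | zero => intro f b c _ _ _; simp
  | succ n ih =>
    intro f b c hf0 hfa hbc
    set g : ℕ → ℝ := fun j => f j - f n with hg
    have hgb := ih g b c
      (fun i hi => by
        have := hfa i n (le_of_lt hi) (Nat.lt_succ_self n)
        simp [hg]; linarith)
      (fun i j hij hj => by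
        have := hfa i j hij (Nat.lt_succ_of_lt hj)
        simp [hg]; linarith)
      (fun r hr => hbc r (le_trans hr (Nat.le_succ n)))
    have split : ∀ d : ℕ → ℝ, ∑ j ∈ range (n+1), f j * d j
        = ∑ j ∈ range n, g j * d j + f n * ∑ j ∈ range (n+1), d j := by
      intro d
      rw [Finset.mul_sum, Finset.sum_range_succ, Finset.sum_range_succ,
        ← add_assoc, ← Finset.sum_add_distrib]
      have : ∀ j, g j * d j + f n * d j = f j * d j := by intro j; simp [hg]; ring
      rw [Finset.sum_congr rfl fun j _ => this j]
    rw [split b, split c]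
    have h2 : f n * ∑ j ∈ range (n+1), b j ≤ f n * ∑ j ∈ range (n+1), c j :=
      mul_le_mul_of_nonneg_left (hbc (n+1) le_rfl) (hf0 n (Nat.lt_succ_self n))
    linarith

lemma reflect_sum (g : ℕ → ℝ) (a m : ℕ) :
    ∑ j ∈ Ico a m, g j = ∑ i ∈ range (m - a), g (m - 1 - i) := by
  rw [Finset.sum_Ico_eq_sum_range, ← Finset.sum_range_reflect]
  refine Finset.sum_congr rfl fun i hi => ?_
  rw [Finset.mem_range] at hi
  congr 1
  omega

lemma count_sum (a b k : ℕ) :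
    ∑ j ∈ Ico a b, (if j < k then (1:ℝ) else 0) = ((min b k - min a k : ℕ) : ℝ) := by
  rw [Finset.sum_boole]
  congr 1
  have h1 : (Ico a b).filter (fun j => j < k) = Ico a (min b k) := by
    ext j; simp only [Finset.mem_filter, Finset.mem_Ico, lt_min_iff]; omega
  rw [h1, Nat.card_Ico]
  omega

lemma lp_aux (m t k : ℕ) (W b : ℕ → ℝ)
    (htm : t ≤ m) (hkm : k ≤ m)
    (hW : ∀ i j, i ≤ j → j < m → W j ≤ W i)
    (hWpos : ∀ j, j < t → 0 ≤ W j)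
    (hWneg : ∀ j, t ≤ j → j < m → W j ≤ 0)
    (hb1 : ∀ r, r ≤ m → ∑ j ∈ range r, b j ≤ (r : ℝ) + ((min k r : ℕ) : ℝ))
    (hb2 : ∀ r, r ≤ m → (k : ℝ) - ((min k r : ℕ) : ℝ) ≤ ∑ j ∈ Ico r m, b j) :
    ∑ j ∈ range m, W j * b j ≤ ∑ j ∈ range t, W j + ∑ j ∈ range k, W j := by
  classical
  set c : ℕ → ℝ := fun j => (if j < t then 1 else 0) + (if j < k then 1 else 0) with hc
  have hcIco : ∀ a r : ℕ, ∑ j ∈ Ico a r, c j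
      = ((min r t - min a t : ℕ) : ℝ) + ((min r k - min a k : ℕ) : ℝ) := by
    intro a r
    rw [hc, Finset.sum_add_distrib, count_sum, count_sum]
  have hcrange : ∀ r : ℕ, ∑ j ∈ range r, c j
      = ((min r t : ℕ) : ℝ) + ((min r k : ℕ) : ℝ) := by
    intro r
    rw [Finset.range_eq_Ico, hcIco]
    simp
  -- head part
  have head : ∑ j ∈ range t, W j * b j ≤ ∑ j ∈ range t, W j * c j := by
    apply abel_le t W b c (fun i hi => hWpos i hi)
      (fun i j hij hj => hW i j hij (lt_of_lt_of_le hj htm))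
    intro r hr
    rw [hcrange]
    have h1 := hb1 r (le_trans hr htm)
    have h2 : min r t = r := by omega
    have h3 : (min r k : ℕ) = (min k r : ℕ) := by omega
    rw [h2, h3]
    exact h1
  -- tail part
  have tail : ∑ j ∈ Ico t m, W j * b j ≤ ∑ j ∈ Ico t m, W j * c j := by
    rw [reflect_sum (fun j => W j * b j) t m, reflect_sum (fun j => W j * c j) t m]
    have key := abel_le (m - t) (fun i => -W (m - 1 - i)) (fun i => c (m - 1 - i))
      (fun i => b (m - 1 - i))
      (fun i hi => by
        show (0:ℝ) ≤ -W (m - 1 - i)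
        have h1 : t ≤ m - 1 - i := by omega
        have h2 : m - 1 - i < m := by omega
        have := hWneg (m - 1 - i) h1 h2; linarith)
      (fun i j hij hj => by
        show -W (m - 1 - j) ≤ -W (m - 1 - i)
        have h1 : m - 1 - j ≤ m - 1 - i := by omega
        have h2 : m - 1 - i < m := by omega
        have := hW (m - 1 - j) (m - 1 - i) h1 h2; linarith)
      (fun r hr => by
        -- ∑_{i<r} c (m-1-i) ≤ ∑_{i<r} b (m-1-i)
        have e1 : ∑ i ∈ range r, c (m - 1 - i) = ∑ j ∈ Ico (m - r) m, c j := by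
          rw [reflect_sum c (m - r) m]
          have : m - (m - r) = r := by omega
          rw [this]
        have e2 : ∑ i ∈ range r, b (m - 1 - i) = ∑ j ∈ Ico (m - r) m, b j := by
          rw [reflect_sum b (m - r) m]
          have : m - (m - r) = r := by omega
          rw [this]
        rw [e1, e2]
        have h2 := hb2 (m - r) (by omega)
        have e3 : ∑ j ∈ Ico (m - r) m, c j = (k : ℝ) - (min k (m - r) : ℕ) := by
          rw [hcIco]
          have g1 : min m t - min (m - r) t = 0 := by omega
          have g2 : (min m k - min (m - r) k : ℕ) = k - min k (m - r) := by omega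
          rw [g1, g2]
          have : min k (m - r) ≤ k := min_le_left _ _
          push_cast [Nat.cast_sub this]
          ring
        rw [e3]
        exact h2)
    have eC : ∀ i, (fun i => -W (m - 1 - i)) i * (fun i => c (m - 1 - i)) i
        = -(W (m-1-i) * c (m-1-i)) := fun i => by ring
    -- key : ∑ (-W)(c') ≤ ∑ (-W)(b')
    have : ∑ i ∈ range (m - t), W (m-1-i) * b (m-1-i)
        ≤ ∑ i ∈ range (m - t), W (m-1-i) * c (m-1-i) := by
      have k2 := key
      simp only [neg_mul, Finset.sum_neg_distrib] at k2
      linarith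
    exact this
  -- combine
  have split : ∀ d : ℕ → ℝ, ∑ j ∈ range m, W j * d j
      = ∑ j ∈ range t, W j * d j + ∑ j ∈ Ico t m, W j * d j := by
    intro d
    rw [Finset.range_eq_Ico, ← Finset.sum_Ico_consecutive _ (Nat.zero_le t) htm, Finset.range_eq_Ico]
  have final : ∑ j ∈ range m, W j * c j = ∑ j ∈ range t, W j + ∑ j ∈ range k, W j := by
    rw [hc]
    have e : ∀ j, W j * ((if j < t then (1:ℝ) else 0) + (if j < k then 1 else 0))
        = (if j < t then W j else 0) + (if j < k then W j else 0) := by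
      intro j; split <;> split <;> ring
    rw [Finset.sum_congr rfl fun j _ => e j, Finset.sum_add_distrib]
    congr 1
    · rw [← Finset.sum_filter]
      apply Finset.sum_congr _ fun j _ => rfl
      ext j; simp; omega
    · rw [← Finset.sum_filter]
      apply Finset.sum_congr _ fun j _ => rfl
      ext j; simp; omega
  calc ∑ j ∈ range m, W j * b j
      = ∑ j ∈ range t, W j * b j + ∑ j ∈ Ico t m, W j * b j := split b
    _ ≤ ∑ j ∈ range t, W j * c j + ∑ j ∈ Ico t m, W j * c j := add_le_add head tail
    _ = ∑ j ∈ range m, W j * c j := (split c).symm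
    _ = ∑ j ∈ range t, W j + ∑ j ∈ range k, W j := final

lemma point_sum (N x : ℕ) (h : x < N) (f : ℕ → ℝ) :
    ∑ y ∈ range N, (if y = x then f y else 0) = f x := by
  rw [Finset.sum_ite_eq' (range N) x f, if_pos (Finset.mem_range.2 h)]

lemma window_sum (N b : ℕ) (h : b ≤ N) (f : ℕ → ℝ) :
    ∑ y ∈ range N, (if y < b then f y else 0) = ∑ y ∈ range b, f y := by
  rw [← Finset.sum_filter]
  congr 1
  ext y
  simp only [Finset.mem_filter, Finset.mem_range]
  omega

lemma window_sum' (N a b : ℕ) (h : b ≤ N) (f : ℕ → ℝ) :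
    ∑ y ∈ range N, (if a ≤ y ∧ y < b then f y else 0) = ∑ y ∈ Ico a b, f y := by
  rw [← Finset.sum_filter]
  congr 1
  ext y
  simp only [Finset.mem_filter, Finset.mem_range, Finset.mem_Ico]
  omega

lemma shift_Ico (a b : ℕ) (f : ℕ → ℝ) :
    ∑ j ∈ Ico a b, f (j+1) = ∑ x ∈ Ico (a+1) (b+1), f x := by
  rw [Finset.sum_Ico_eq_sum_range, Finset.sum_Ico_eq_sum_range]
  have e : b + 1 - (a+1) = b - a := by omega
  rw [e]
  exact Finset.sum_congr rfl fun i _ => by congr 1; omega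

lemma split3 (m r : ℕ) (hr : r ≤ m) (f : ℕ → ℝ) :
    ∑ x ∈ range (m+1), f x = f 0 + ∑ x ∈ Ico 1 (r+1), f x + ∑ x ∈ Ico (r+1) (m+1), f x := by
  rw [Finset.range_eq_Ico,
    ← Finset.sum_Ico_consecutive f (by omega : 0 ≤ r+1) (by omega : r+1 ≤ m+1),
    ← Finset.sum_Ico_consecutive f (by omega : 0 ≤ 1) (by omega : 1 ≤ r+1)]
  congr 1
  congr 1
  rw [← Finset.range_eq_Ico, Finset.sum_range_one]

lemma hb1_lemma (m k : ℕ) (U : Fin k → ℕ → ℝ)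
    (husq : ∀ i, ∑ x ∈ range (m+1), (U i x)^2 = 1)
    (hbes : ∀ c : ℕ → ℝ, ∑ i, (∑ x ∈ range (m+1), c x * U i x)^2 ≤ ∑ x ∈ range (m+1), (c x)^2)
    (r : ℕ) (hr : r ≤ m) :
    ∑ j ∈ range r, (∑ i, (U i 0 - U i (j+1))^2) ≤ (r:ℝ) + ((min k r : ℕ) : ℝ) := by
  have hr1 : (0:ℝ) < (r:ℝ) + 1 := by positivity
  set σ : Fin k → ℝ := fun i => ∑ x ∈ range (r+1), U i x with hσ
  set Q : Fin k → ℝ := fun i => ∑ x ∈ range (r+1), (U i x)^2 with hQ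
  have foldσ : ∀ i, (∑ x ∈ range (r+1), U i x) = σ i := fun i => rfl
  have foldQ : ∀ i, (∑ x ∈ range (r+1), (U i x)^2) = Q i := fun i => rfl
  rw [Finset.sum_comm]
  have expand : ∀ i : Fin k, ∑ j ∈ range r, (U i 0 - U i (j+1))^2
      = (Q i - (σ i)^2/((r:ℝ)+1)) + (((r:ℝ)+1) * U i 0 - σ i)^2/((r:ℝ)+1) := by
    intro i
    have e0 : ∑ j ∈ range r, (U i 0 - U i (j+1))^2
        = ∑ j ∈ range r, (((U i 0)^2 + (U i (j+1))^2) - (2 * U i 0) * U i (j+1)) :=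
      Finset.sum_congr rfl fun j _ => by ring
    have e1 : ∑ j ∈ range r, U i (j+1) = σ i - U i 0 := by
      rw [← foldσ i, Finset.sum_range_succ' (fun x => U i x) r]
      ring
    have e2 : ∑ j ∈ range r, (U i (j+1))^2 = Q i - (U i 0)^2 := by
      rw [← foldQ i, Finset.sum_range_succ' (fun x => (U i x)^2) r]
      ring
    rw [e0, Finset.sum_sub_distrib, Finset.sum_add_distrib, e2, Finset.sum_const,
      Finset.card_range, ← Finset.mul_sum, e1, nsmul_eq_mul]
    field_simp
    ring
  rw [Finset.sum_congr rfl fun i _ => expand i, Finset.sum_add_distrib]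
  have γbound : ∑ i : Fin k, (((r:ℝ)+1) * U i 0 - σ i)^2/((r:ℝ)+1) ≤ (r:ℝ) := by
    set w : ℕ → ℝ := fun y => (if y = 0 then ((r:ℝ)+1) else 0) - (if y < r+1 then 1 else 0)
      with hw
    have hdot : ∀ i, ∑ x ∈ range (m+1), w x * U i x = ((r:ℝ)+1) * U i 0 - σ i := by
      intro i
      simp only [hw, sub_mul, ite_mul, one_mul, zero_mul]
      rw [Finset.sum_sub_distrib]
      rw [point_sum (m+1) 0 (by omega) (fun y => ((r:ℝ)+1) * U i y)]
      rw [window_sum (m+1) (r+1) (by omega) (fun y => U i y)]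
    have hnorm : ∑ x ∈ range (m+1), (w x)^2 = (r:ℝ)^2 + r := by
      have e : ∀ y, (w y)^2 = ((if y = 0 then ((r:ℝ)+1)^2 else 0)
          - (if y = 0 then 2*((r:ℝ)+1) else 0)) + (if y < r+1 then (1:ℝ) else 0) := by
        intro y
        simp only [hw]
        by_cases h0 : y = 0
        · have h1 : y < r + 1 := by omega
          simp only [if_pos h0, if_pos h1]
          ring
        · simp only [if_neg h0]
          by_cases h1 : y < r+1
          · simp only [if_pos h1]; ring
          · simp only [if_neg h1]; ring
      rw [Finset.sum_congr rfl fun y _ => e y, Finset.sum_add_distrib,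
        Finset.sum_sub_distrib]
      rw [point_sum (m+1) 0 (by omega) (fun _ => ((r:ℝ)+1)^2)]
      rw [point_sum (m+1) 0 (by omega) (fun _ => 2*((r:ℝ)+1))]
      rw [window_sum (m+1) (r+1) (by omega) (fun _ => (1:ℝ))]
      rw [Finset.sum_const, Finset.card_range, nsmul_eq_mul]
      push_cast
      ring
    have hb := hbes w
    rw [hnorm] at hb
    have subst : ∀ i : Fin k, (((r:ℝ)+1) * U i 0 - σ i)^2/((r:ℝ)+1)
        = (∑ x ∈ range (m+1), w x * U i x)^2/((r:ℝ)+1) := fun i => by rw [hdot i]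
    rw [Finset.sum_congr rfl fun i _ => subst i, ← Finset.sum_div, div_le_iff₀ hr1]
    calc ∑ i : Fin k, (∑ x ∈ range (m+1), w x * U i x)^2 ≤ (r:ℝ)^2 + r := hb
      _ = (r:ℝ) * ((r:ℝ)+1) := by ring
  have πk : ∑ i : Fin k, (Q i - (σ i)^2/((r:ℝ)+1)) ≤ ((min k r : ℕ) : ℝ) := by
    have cast_min : ((min k r : ℕ) : ℝ) = min (k:ℝ) (r:ℝ) := by
      rcases le_total k r with h | h
      · rw [min_eq_left h, min_eq_left (by exact_mod_cast h)]
      · rw [min_eq_right h, min_eq_right (by exact_mod_cast h)]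
    rw [cast_min]
    apply le_min
    · calc ∑ i : Fin k, (Q i - (σ i)^2/((r:ℝ)+1)) ≤ ∑ _i : Fin k, (1:ℝ) := by
            apply Finset.sum_le_sum
            intro i _
            have hQ1 : Q i ≤ 1 := by
              rw [← husq i, ← foldQ i]
              apply Finset.sum_le_sum_of_subset_of_nonneg
              · exact Finset.range_subset_range.2 (by omega)
              · intro y _ _; positivity
            have h2 : 0 ≤ (σ i)^2/((r:ℝ)+1) := by positivity
            linarith
        _ = (k:ℝ) := by simp
    · have var_id : ∀ i : Fin k, Q i - (σ i)^2/((r:ℝ)+1)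
          = ∑ x ∈ range (r+1), (U i x - σ i/((r:ℝ)+1))^2 := by
        intro i
        have e : ∀ x, (U i x - σ i/((r:ℝ)+1))^2
            = ((U i x)^2 + (σ i/((r:ℝ)+1))^2) - (2*(σ i/((r:ℝ)+1)))*U i x := fun x => by
          ring
        rw [Finset.sum_congr rfl fun x _ => e x, Finset.sum_sub_distrib,
          Finset.sum_add_distrib, ← Finset.mul_sum, foldσ i, foldQ i, Finset.sum_const,
          Finset.card_range, nsmul_eq_mul]
        field_simp
        push_cast
        ring
      rw [Finset.sum_congr rfl fun i _ => var_id i, Finset.sum_comm]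
      have percoord : ∀ x ∈ range (r+1),
          ∑ i : Fin k, (U i x - σ i/((r:ℝ)+1))^2 ≤ (r:ℝ)/((r:ℝ)+1) := by
        intro x hx
        rw [Finset.mem_range] at hx
        set c : ℕ → ℝ := fun y => (if y = x then 1 else 0)
          - (if y < r+1 then 1/((r:ℝ)+1) else 0) with hc
        have hdot : ∀ i, ∑ y ∈ range (m+1), c y * U i y = U i x - σ i/((r:ℝ)+1) := by
          intro i
          simp only [hc, sub_mul, ite_mul, one_mul, zero_mul]
          rw [Finset.sum_sub_distrib]
          rw [point_sum (m+1) x (by omega) (fun y => U i y)]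
          rw [window_sum (m+1) (r+1) (by omega) (fun y => 1/((r:ℝ)+1) * U i y)]
          rw [← Finset.mul_sum, foldσ i]
          ring
        have hnorm : ∑ y ∈ range (m+1), (c y)^2 = (r:ℝ)/((r:ℝ)+1) := by
          have e : ∀ y, (c y)^2 = ((if y = x then (1:ℝ) else 0)
              - (if y = x then 2/((r:ℝ)+1) else 0))
              + (if y < r+1 then 1/((r:ℝ)+1)^2 else 0) := by
            intro y
            simp only [hc]
            by_cases h0 : y = x
            · have h1 : y < r + 1 := by omega
              simp only [if_pos h0, if_pos h1]
              have hne : ((r:ℝ)+1) ≠ 0 := by positivity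
              field_simp
              ring
            · simp only [if_neg h0]
              by_cases h1 : y < r+1
              · simp only [if_pos h1]
                have hne : ((r:ℝ)+1) ≠ 0 := by positivity
                field_simp
                ring
              · simp only [if_neg h1]; ring
          rw [Finset.sum_congr rfl fun y _ => e y, Finset.sum_add_distrib,
            Finset.sum_sub_distrib]
          rw [point_sum (m+1) x (by omega) (fun _ => (1:ℝ))]
          rw [point_sum (m+1) x (by omega) (fun _ => 2/((r:ℝ)+1))]
          rw [window_sum (m+1) (r+1) (by omega) (fun _ => 1/((r:ℝ)+1)^2)]
          rw [Finset.sum_const, Finset.card_range, nsmul_eq_mul]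
          push_cast
          field_simp
          ring
        have hb := hbes c
        rw [hnorm] at hb
        have subst : ∀ i : Fin k, (U i x - σ i/((r:ℝ)+1))^2
            = (∑ y ∈ range (m+1), c y * U i y)^2 := fun i => by rw [hdot i]
        rw [Finset.sum_congr rfl fun i _ => subst i]
        exact hb
      calc ∑ x ∈ range (r+1), ∑ i : Fin k, (U i x - σ i/((r:ℝ)+1))^2
          ≤ ∑ _x ∈ range (r+1), (r:ℝ)/((r:ℝ)+1) := Finset.sum_le_sum percoord
        _ = ((r:ℝ)+1) * ((r:ℝ)/((r:ℝ)+1)) := by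
            rw [Finset.sum_const, Finset.card_range, nsmul_eq_mul]; push_cast; ring
        _ = (r:ℝ) := by field_simp
  linarith

lemma hb2_lemma (m k : ℕ) (U : Fin k → ℕ → ℝ)
    (husq : ∀ i, ∑ x ∈ range (m+1), (U i x)^2 = 1)
    (husum : ∀ i, ∑ x ∈ range (m+1), U i x = 0)
    (hbes : ∀ c : ℕ → ℝ, ∑ i, (∑ x ∈ range (m+1), c x * U i x)^2 ≤ ∑ x ∈ range (m+1), (c x)^2)
    (hkm : k ≤ m)
    (r : ℕ) (hr : r ≤ m) :
    (k:ℝ) - ((min k r : ℕ) : ℝ) ≤ ∑ j ∈ Ico r m, (∑ i, (U i 0 - U i (j+1))^2) := by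
  have hrm : (r:ℝ) ≤ (m:ℝ) := by exact_mod_cast hr
  have hμ : (0:ℝ) < (m:ℝ) - r + 1 := by linarith
  have hm1 : (0:ℝ) < (m:ℝ) + 1 := by positivity
  set μ : ℝ := (m:ℝ) - r + 1 with hμdef
  set s : Fin k → ℝ := fun i => ∑ x ∈ Ico 1 (r+1), U i x with hs
  set p : Fin k → ℝ := fun i => ∑ x ∈ Ico 1 (r+1), (U i x)^2 with hp
  have folds : ∀ i, (∑ x ∈ Ico 1 (r+1), U i x) = s i := fun _ => rfl
  have foldp : ∀ i, (∑ x ∈ Ico 1 (r+1), (U i x)^2) = p i := fun _ => rfl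
  rw [Finset.sum_comm]
  have perI : ∀ i : Fin k,
      1 - (p i + (s i)^2/μ) ≤ ∑ j ∈ Ico r m, (U i 0 - U i (j+1))^2 := by
    intro i
    have hsplit1 := split3 m r hr (fun x => U i x)
    have hsplit2 := split3 m r hr (fun x => (U i x)^2)
    rw [husum i, folds i] at hsplit1
    rw [husq i, foldp i] at hsplit2
    have hT : ∑ j ∈ Ico r m, (U i 0 - U i (j+1))^2
        = (μ - 1) * (U i 0)^2 + (∑ x ∈ Ico (r+1) (m+1), (U i x)^2)
          - (2 * U i 0) * (∑ x ∈ Ico (r+1) (m+1), U i x) := by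
      have e0 : ∀ j, (U i 0 - U i (j+1))^2
          = ((U i 0)^2 + (U i (j+1))^2) - (2 * U i 0) * U i (j+1) := fun j => by ring
      rw [Finset.sum_congr rfl fun j _ => e0 j, Finset.sum_sub_distrib,
        Finset.sum_add_distrib, ← Finset.mul_sum, Finset.sum_const, Nat.card_Ico,
        nsmul_eq_mul]
      rw [shift_Ico r m (fun x => (U i x)^2), shift_Ico r m (fun x => U i x)]
      have hcast : ((m - r : ℕ) : ℝ) = μ - 1 := by
        rw [hμdef, Nat.cast_sub hr]; ring
      rw [hcast]
    have hsub2 : (∑ x ∈ Ico (r+1) (m+1), (U i x)^2) = 1 - (U i 0)^2 - p i := by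
      linarith
    have hsub1 : (∑ x ∈ Ico (r+1) (m+1), U i x) = -(U i 0) - s i := by
      linarith
    rw [hT, hsub1, hsub2]
    have hsq : (0:ℝ) ≤ (μ * U i 0 + s i)^2 / μ := by positivity
    have expand : ((μ-1)*(U i 0)^2 + (1 - (U i 0)^2 - p i) - (2*U i 0)*(-(U i 0) - s i))
        - (1 - (p i + (s i)^2/μ)) = (μ * U i 0 + s i)^2/μ := by
      field_simp
      ring
    linarith
  have step1 : (k:ℝ) - ∑ i, (p i + (s i)^2/μ)
      ≤ ∑ i, ∑ j ∈ Ico r m, (U i 0 - U i (j+1))^2 := by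
    have h := Finset.sum_le_sum (fun i (_ : i ∈ Finset.univ) => perI i)
    have e : ∑ _i : Fin k, (1:ℝ) - ∑ i, (p i + (s i)^2/μ)
        = ∑ i : Fin k, (1 - (p i + (s i)^2/μ)) := by
      rw [Finset.sum_sub_distrib]
    have e2 : ∑ _i : Fin k, (1:ℝ) = (k:ℝ) := by simp
    linarith [e ▸ h, e2]
  have gbound : ∑ i : Fin k, (p i + (s i)^2/μ) ≤ ((min k r : ℕ) : ℝ) := by
    have cast_min : ((min k r : ℕ) : ℝ) = min (k:ℝ) (r:ℝ) := by
      rcases le_total k r with h | h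
      · rw [min_eq_left h, min_eq_left (by exact_mod_cast h)]
      · rw [min_eq_right h, min_eq_right (by exact_mod_cast h)]
    rw [cast_min]
    apply le_min
    · -- each term ≤ 1 via Cauchy-Schwarz
      calc ∑ i : Fin k, (p i + (s i)^2/μ) ≤ ∑ _i : Fin k, (1:ℝ) := by
            apply Finset.sum_le_sum
            intro i _
            have hsplit1 := split3 m r hr (fun x => U i x)
            have hsplit2 := split3 m r hr (fun x => (U i x)^2)
            rw [husum i, folds i] at hsplit1
            rw [husq i, foldp i] at hsplit2
            have h0notin : 0 ∉ Ico (r+1) (m+1) := by simp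
            have hCS := sq_sum_le_card_mul_sum_sq
              (s := insert 0 (Ico (r+1) (m+1))) (f := U i)
            rw [Finset.sum_insert h0notin, Finset.sum_insert h0notin,
              Finset.card_insert_of_notMem h0notin, Nat.card_Ico] at hCS
            have hc2 : ((m + 1 - (r+1) + 1 : ℕ) : ℝ) = μ := by
              rw [hμdef]
              have e : m + 1 - (r+1) + 1 = m - r + 1 := by omega
              rw [e, Nat.cast_add, Nat.cast_sub hr]
              norm_num
            have hv1 : U i 0 + ∑ x ∈ Ico (r+1) (m+1), U i x = -(s i) := by linarith
            have hv2 : (U i 0)^2 + ∑ x ∈ Ico (r+1) (m+1), (U i x)^2 = 1 - p i := by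
              linarith
            rw [hv1, hv2, hc2] at hCS
            have hs2 : (s i)^2 ≤ μ * (1 - p i) := by
              calc (s i)^2 = (-(s i))^2 := by ring
                _ ≤ μ * (1 - p i) := hCS
            have : (s i)^2/μ ≤ 1 - p i := by
              rw [div_le_iff₀ hμ]
              linarith [hs2]
            linarith
        _ = (k:ℝ) := by simp
    · -- ≤ r via Bessel
      rw [Finset.sum_add_distrib]
      -- part 1 : ∑ p i ≤ r * m/(m+1)
      have part1 : ∑ i : Fin k, p i ≤ (r:ℝ) * ((m:ℝ)/((m:ℝ)+1)) := by
        rw [hp, Finset.sum_comm]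
        have percoord : ∀ x ∈ Ico 1 (r+1),
            ∑ i : Fin k, (U i x)^2 ≤ (m:ℝ)/((m:ℝ)+1) := by
          intro x hx
          rw [Finset.mem_Ico] at hx
          set c : ℕ → ℝ := fun y => (if y = x then 1 else 0) - 1/((m:ℝ)+1) with hc
          have hdot : ∀ i, ∑ y ∈ range (m+1), c y * U i y = U i x := by
            intro i
            simp only [hc, sub_mul, ite_mul, one_mul, zero_mul]
            rw [Finset.sum_sub_distrib]
            rw [point_sum (m+1) x (by omega) (fun y => U i y)]
            rw [← Finset.mul_sum, husum i]
            ring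
          have hnorm : ∑ y ∈ range (m+1), (c y)^2 = (m:ℝ)/((m:ℝ)+1) := by
            have e : ∀ y, (c y)^2 = ((if y = x then (1:ℝ) else 0)
                - (if y = x then 2/((m:ℝ)+1) else 0)) + (1/((m:ℝ)+1))^2 := by
              intro y
              simp only [hc]
              by_cases h0 : y = x
              · simp only [if_pos h0]
                ring
              · simp only [if_neg h0]
                ring
            rw [Finset.sum_congr rfl fun y _ => e y, Finset.sum_add_distrib,
              Finset.sum_sub_distrib]
            rw [point_sum (m+1) x (by omega) (fun _ => (1:ℝ))]
            rw [point_sum (m+1) x (by omega) (fun _ => 2/((m:ℝ)+1))]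
            rw [Finset.sum_const, Finset.card_range, nsmul_eq_mul]
            push_cast
            field_simp
            ring
          have hb := hbes c
          rw [hnorm] at hb
          have subst : ∀ i : Fin k, (U i x)^2
              = (∑ y ∈ range (m+1), c y * U i y)^2 := fun i => by rw [hdot i]
          rw [Finset.sum_congr rfl fun i _ => subst i]
          exact hb
        calc ∑ x ∈ Ico 1 (r+1), ∑ i : Fin k, (U i x)^2
            ≤ ∑ _x ∈ Ico 1 (r+1), (m:ℝ)/((m:ℝ)+1) := Finset.sum_le_sum percoord
          _ = (r:ℝ) * ((m:ℝ)/((m:ℝ)+1)) := by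
              rw [Finset.sum_const, Nat.card_Ico, nsmul_eq_mul]
              norm_num
      -- part 2 : ∑ s i ^2 / μ ≤ r / (m+1)
      have part2 : ∑ i : Fin k, (s i)^2/μ ≤ (r:ℝ)/((m:ℝ)+1) := by
        set c : ℕ → ℝ := fun y => (if 1 ≤ y ∧ y < r+1 then 1 else 0) - (r:ℝ)/((m:ℝ)+1)
          with hc
        have hdot : ∀ i, ∑ y ∈ range (m+1), c y * U i y = s i := by
          intro i
          simp only [hc, sub_mul, ite_mul, one_mul, zero_mul]
          rw [Finset.sum_sub_distrib]
          rw [window_sum' (m+1) 1 (r+1) (by omega) (fun y => U i y)]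
          rw [← Finset.mul_sum, husum i, folds i]
          ring
        have hnorm : ∑ y ∈ range (m+1), (c y)^2 = (r:ℝ) * μ/((m:ℝ)+1) := by
          have e : ∀ y, (c y)^2 = ((if 1 ≤ y ∧ y < r+1 then (1:ℝ) else 0)
              - (if 1 ≤ y ∧ y < r+1 then 2*(r:ℝ)/((m:ℝ)+1) else 0))
              + ((r:ℝ)/((m:ℝ)+1))^2 := by
            intro y
            simp only [hc]
            by_cases h0 : 1 ≤ y ∧ y < r+1
            · simp only [if_pos h0]
              ring
            · simp only [if_neg h0]
              ring
          rw [Finset.sum_congr rfl fun y _ => e y, Finset.sum_add_distrib,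
            Finset.sum_sub_distrib]
          rw [window_sum' (m+1) 1 (r+1) (by omega) (fun _ => (1:ℝ))]
          rw [window_sum' (m+1) 1 (r+1) (by omega) (fun _ => 2*(r:ℝ)/((m:ℝ)+1))]
          rw [Finset.sum_const, Finset.sum_const, Finset.sum_const, Nat.card_Ico,
            Finset.card_range]
          simp only [nsmul_eq_mul]
          have e2 : ((r + 1 - 1 : ℕ) : ℝ) = (r:ℝ) := by norm_num
          rw [e2, hμdef]
          push_cast
          field_simp
          ring
        have hb := hbes c
        rw [hnorm] at hb
        have subst : ∀ i : Fin k, (s i)^2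
            = (∑ y ∈ range (m+1), c y * U i y)^2 := fun i => by rw [hdot i]
        rw [← Finset.sum_div, Finset.sum_congr rfl fun i _ => subst i]
        rw [div_le_div_iff₀ hμ hm1]
        calc (∑ i : Fin k, (∑ y ∈ range (m+1), c y * U i y)^2) * ((m:ℝ)+1)
            ≤ ((r:ℝ) * μ/((m:ℝ)+1)) * ((m:ℝ)+1) := by
              apply mul_le_mul_of_nonneg_right hb (le_of_lt hm1)
          _ = (r:ℝ) * μ := by field_simp
      have : (r:ℝ) * ((m:ℝ)/((m:ℝ)+1)) + (r:ℝ)/((m:ℝ)+1) = (r:ℝ) := by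
        field_simp
      linarith
  linarith

lemma starAdj_00 (m : ℕ) (ω : Fin m → ℝ) : starAdj m ω 0 0 = 0 := by simp [starAdj]

lemma starAdj_0s (m : ℕ) (ω : Fin m → ℝ) (j : Fin m) : starAdj m ω 0 j.succ = ω j := by
  simp [starAdj, Fin.succ_ne_zero]

lemma starAdj_s0 (m : ℕ) (ω : Fin m → ℝ) (j : Fin m) : starAdj m ω j.succ 0 = ω j := by
  simp [starAdj, Fin.succ_ne_zero]

lemma starAdj_ss (m : ℕ) (ω : Fin m → ℝ) (i j : Fin m) : starAdj m ω i.succ j.succ = 0 := by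
  simp [starAdj, Fin.succ_ne_zero]

lemma zero_ne_succ_iff (m : ℕ) (x : Fin m) : ((0 : Fin (m+1)) = x.succ) = False :=
  eq_false (Fin.succ_ne_zero x).symm

lemma succ_ne_zero_iff (m : ℕ) (x : Fin m) : (x.succ = (0 : Fin (m+1))) = False :=
  eq_false (Fin.succ_ne_zero x)

lemma starAdj_rowsum0 (m : ℕ) (ω : Fin m → ℝ) :
    ∑ y, starAdj m ω 0 y = ∑ j, ω j := by
  rw [Fin.sum_univ_succ]
  simp [starAdj_00, starAdj_0s]

lemma starAdj_rowsums (m : ℕ) (ω : Fin m → ℝ) (i : Fin m) :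
    ∑ y, starAdj m ω i.succ y = ω i := by
  rw [Fin.sum_univ_succ]
  simp [starAdj_s0, starAdj_ss]

lemma lap_mulVec_0 (m : ℕ) (ω : Fin m → ℝ) (u : Fin (m+1) → ℝ) :
    (lap (starAdj m ω)).mulVec u 0 = (∑ j, ω j) * u 0 - ∑ j, ω j * u j.succ := by
  simp only [lap, mulVec, dotProduct, Matrix.sub_apply, Matrix.diagonal_apply]
  rw [Fin.sum_univ_succ]
  simp [starAdj_00, starAdj_0s, zero_ne_succ_iff, succ_ne_zero_iff, starAdj_rowsum0,
    sub_mul, Finset.sum_sub_distrib]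
  ring

lemma lap_mulVec_s (m : ℕ) (ω : Fin m → ℝ) (u : Fin (m+1) → ℝ) (i : Fin m) :
    (lap (starAdj m ω)).mulVec u i.succ = ω i * u i.succ - ω i * u 0 := by
  simp only [lap, mulVec, dotProduct, Matrix.sub_apply, Matrix.diagonal_apply]
  rw [Fin.sum_univ_succ]
  simp [starAdj_s0, starAdj_ss, zero_ne_succ_iff, succ_ne_zero_iff, starAdj_rowsums,
    Fin.succ_inj, sub_mul, Finset.sum_sub_distrib, Finset.sum_ite_eq]
  ring

lemma quadform (m : ℕ) (ω : Fin m → ℝ) (u : Fin (m+1) → ℝ) :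
    u ⬝ᵥ (lap (starAdj m ω)).mulVec u = ∑ j : Fin m, ω j * (u 0 - u j.succ)^2 := by
  rw [dotProduct, Fin.sum_univ_succ, lap_mulVec_0]
  simp only [lap_mulVec_s]
  have h1 : u 0 * ((∑ j, ω j) * u 0) = ∑ j : Fin m, ω j * u 0 ^ 2 := by
    rw [Finset.sum_mul, Finset.mul_sum]
    exact Finset.sum_congr rfl fun j _ => by ring
  have h2 : u 0 * (∑ j : Fin m, ω j * u j.succ) = ∑ j : Fin m, ω j * u 0 * u j.succ := by
    rw [Finset.mul_sum]
    exact Finset.sum_congr rfl fun j _ => by ring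
  rw [mul_sub, h1, h2, ← Finset.sum_sub_distrib, ← Finset.sum_add_distrib]
  exact Finset.sum_congr rfl fun j _ => by ring

lemma trace_lap (m : ℕ) (ω : Fin m → ℝ) :
    (lap (starAdj m ω)).trace = 2 * ∑ i, ω i := by
  rw [Matrix.trace]
  simp only [Matrix.diag, lap, Matrix.sub_apply, Matrix.diagonal_apply_eq]
  rw [Fin.sum_univ_succ]
  simp only [starAdj_00, starAdj_ss, starAdj_rowsum0, starAdj_rowsums, sub_zero]
  ring

lemma filter_conv (m s : ℕ) (hs : s ≤ m) (ω : Fin m → ℝ) (W : ℕ → ℝ)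
    (hWval : ∀ (j) (h : j < m), W j = ω ⟨j, h⟩) :
    ∑ i ∈ Finset.univ.filter (fun i : Fin m => (i : ℕ) < s), ω i = ∑ j ∈ range s, W j := by
  rw [← window_sum m s hs W, Finset.sum_filter,
    ← Fin.sum_univ_eq_sum_range (fun j => if j < s then W j else 0) m]
  refine Finset.sum_congr rfl fun j _ => ?_
  by_cases h : (j:ℕ) < s
  · rw [if_pos h, if_pos h, hWval j.val j.isLt, Fin.eta]
  · rw [if_neg h, if_neg h]

theorem weighted_star_lap_eigenvalue_bounds {m : ℕ}
    (ω : Fin m → ℝ) (hmono : Antitone ω)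
    (t : ℕ) (ht : t ≤ m)
    (hpos : ∀ i : Fin m, (i : ℕ) < t → 0 < ω i)
    (hnonpos : ∀ i : Fin m, t ≤ (i : ℕ) → ω i ≤ 0) :
    (∀ k : ℕ, 1 ≤ k → k ≤ m - 1 →
      ∀ u : Fin k → Fin (m + 1) → ℝ,
        (∀ i j, u i ⬝ᵥ u j = if i = j then 1 else 0) →
        (∀ i, ∑ l, u i l = 0) →
        ∑ i, u i ⬝ᵥ (lap (starAdj m ω)).mulVec (u i) ≤
          (∑ i ∈ Finset.univ.filter (fun i : Fin m => (i : ℕ) < t), ω i) +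
            ∑ i ∈ Finset.univ.filter (fun i : Fin m => (i : ℕ) < k), ω i) ∧
    (lap (starAdj m ω)).trace = 2 * ∑ i, ω i := by
  constructor
  · intro k hk1 hk2 u huv hu0
    have hkm : k ≤ m := by omega
    set U : Fin k → ℕ → ℝ := fun i x => u i (@Nat.cast (Fin (m+1)) (Fin.NatCast.instNatCast (m+1)) x) with hU
    have hUval : ∀ (i : Fin k) (x : Fin (m+1)), U i x.val = u i x := by
      intro i x
      simp only [hU, Fin.cast_val_eq_self]
    have hU0 : ∀ i : Fin k, U i 0 = u i 0 := by
      intro i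
      simp only [hU, Nat.cast_zero]
      rfl
    have hUsucc : ∀ (i : Fin k) (j : Fin m), U i (j.val + 1) = u i j.succ := by
      intro i j
      simp only [hU]
      congr 1
      apply Fin.ext
      rw [Fin.val_cast_of_lt (by omega : (j:ℕ)+1 < m+1), Fin.val_succ]
    have husq : ∀ i, ∑ x ∈ range (m+1), (U i x)^2 = 1 := by
      intro i
      rw [← Fin.sum_univ_eq_sum_range (fun x => (U i x)^2) (m+1)]
      have h1 := huv i i
      rw [if_pos rfl] at h1
      rw [← h1, dotProduct]
      exact Finset.sum_congr rfl fun x _ => by rw [hUval i x]; ring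
    have husum0 : ∀ i, ∑ x ∈ range (m+1), U i x = 0 := by
      intro i
      rw [← Fin.sum_univ_eq_sum_range (fun x => U i x) (m+1), ← hu0 i]
      exact Finset.sum_congr rfl fun x _ => hUval i x
    have hbes : ∀ c : ℕ → ℝ, ∑ i, (∑ x ∈ range (m+1), c x * U i x)^2
        ≤ ∑ x ∈ range (m+1), (c x)^2 := by
      intro c
      have hb := bessel huv (fun y : Fin (m+1) => c y.val)
      have e1 : ∀ i, (fun y : Fin (m+1) => c y.val) ⬝ᵥ u i
          = ∑ x ∈ range (m+1), c x * U i x := by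
        intro i
        rw [dotProduct, ← Fin.sum_univ_eq_sum_range (fun x => c x * U i x) (m+1)]
        exact Finset.sum_congr rfl fun x _ => by rw [hUval i x]
      have e2 : (fun y : Fin (m+1) => c y.val) ⬝ᵥ (fun y : Fin (m+1) => c y.val)
          = ∑ x ∈ range (m+1), (c x)^2 := by
        rw [dotProduct, ← Fin.sum_univ_eq_sum_range (fun x => (c x)^2) (m+1)]
        exact Finset.sum_congr rfl fun x _ => by ring
      rw [← e2]
      calc ∑ i, (∑ x ∈ range (m+1), c x * U i x)^2
          = ∑ i, ((fun y : Fin (m+1) => c y.val) ⬝ᵥ u i)^2 :=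
            (Finset.sum_congr rfl fun i _ => by rw [e1 i])
        _ ≤ _ := hb
    set W : ℕ → ℝ := fun j => if h : j < m then ω ⟨j, h⟩ else 0 with hWdef
    have hWval : ∀ (j) (h : j < m), W j = ω ⟨j, h⟩ := fun j h => by
      simp only [hWdef, dif_pos h]
    set bfun : ℕ → ℝ := fun j => ∑ i, (U i 0 - U i (j+1))^2 with hbdef
    have hLHS : ∑ i, u i ⬝ᵥ (lap (starAdj m ω)).mulVec (u i)
        = ∑ j ∈ range m, W j * bfun j := by
      rw [Finset.sum_congr rfl fun i _ => quadform m ω (u i), Finset.sum_comm,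
        ← Fin.sum_univ_eq_sum_range (fun j => W j * bfun j) m]
      refine Finset.sum_congr rfl fun j _ => ?_
      rw [hWval j.val j.isLt, Fin.eta]
      simp only [hbdef]
      rw [Finset.mul_sum]
      refine Finset.sum_congr rfl fun i _ => ?_
      rw [hU0 i, hUsucc i j]
    rw [hLHS, filter_conv m t ht ω W hWval, filter_conv m k hkm ω W hWval]
    apply lp_aux m t k W bfun ht hkm
    · intro i j hij hjm
      rw [hWval j hjm, hWval i (by omega)]
      exact hmono (by exact hij : (⟨i, by omega⟩ : Fin m) ≤ ⟨j, hjm⟩)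
    · intro j hjt
      rw [hWval j (by omega)]
      exact (hpos ⟨j, by omega⟩ hjt).le
    · intro j hjt hjm
      rw [hWval j hjm]
      exact hnonpos ⟨j, hjm⟩ hjt
    · exact fun r hr => hb1_lemma m k U husq hbes r hr
    · exact fun r hr => hb2_lemma m k U husq husum0 hbes hkm r hr
  · exact trace_lap m ω
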